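/- For every integer m ≥ 1 and every z ∈ ℂ, one has p_{mp−1}(z) = 0 if and only if either p_{p−1}(z) = 0 (i.e., z is a Dirichlet point, a point where the 21-entry of T_p(z) vanishes) or Δ(z) = 2·cos(πq/m) for some integer q with 1 ≤ q ≤ m − 1. (Theorem 2.1: exact description of the zeros of p_{mp−1}.) -/

import Mathlib

open Polynomial Matrix

/-- The one-step transfer matrix `A_k(z)` for periodic OPRL. -/
noncomputable def JacobiA (a b : ℕ → ℝ) (k : ℕ) (z : ℂ) : Matrix (Fin 2) (Fin 2) ℂ :=
  ((a (k + 1) : ℂ))⁻¹ • !![z - (b (k + 1) : ℂ), -(a k : ℂ); (a (k + 1) : ℂ), 0]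

/-- The transfer matrix `T_n(z) = A_{n-1}(z) ⋯ A_0(z)`. -/
noncomputable def JacobiT (a b : ℕ → ℝ) : ℕ → ℂ → Matrix (Fin 2) (Fin 2) ℂ
  | 0, _ => 1
  | n + 1, z => JacobiA a b n z * JacobiT a b n z

/-- The discriminant `Δ(z) = tr T_p(z)`. -/
noncomputable def JacobiDisc (a b : ℕ → ℝ) (p : ℕ) (z : ℂ) : ℂ :=
  (JacobiT a b p z).trace


/-- Chebyshev-like sequence: `chebU Δ n` is `U_{n-1}(Δ/2)`. -/
noncomputable def chebU (Δ : ℂ) : ℕ → ℂ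
  | 0 => 0
  | 1 => 1
  | (n+2) => Δ * chebU Δ (n+1) - chebU Δ n

lemma chebU_closed (Δ w : ℂ) (hw : w ≠ 0) (hws : w + w⁻¹ = Δ) :
    ∀ n, (w - w⁻¹) * chebU Δ n = w ^ n - w⁻¹ ^ n := by
  have key : ∀ n, (w - w⁻¹) * chebU Δ n = w ^ n - w⁻¹ ^ n ∧
      (w - w⁻¹) * chebU Δ (n+1) = w ^ (n+1) - w⁻¹ ^ (n+1) := by
    intro n
    induction n with
    | zero => simp [chebU]
    | succ n ih =>
      refine ⟨ih.2, ?_⟩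
      have h2 : chebU Δ (n+2) = Δ * chebU Δ (n+1) - chebU Δ n := rfl
      rw [h2]
      have hinv : w * w⁻¹ = 1 := mul_inv_cancel₀ hw
      calc (w - w⁻¹) * (Δ * chebU Δ (n+1) - chebU Δ n)
          = (w + w⁻¹) * ((w - w⁻¹) * chebU Δ (n+1)) - (w - w⁻¹) * chebU Δ n := by
            rw [hws]; ring
        _ = (w + w⁻¹) * (w ^ (n+1) - w⁻¹ ^ (n+1)) - (w ^ n - w⁻¹ ^ n) := by
            rw [ih.1, ih.2]
        _ = w ^ (n+2) - w⁻¹ ^ (n+2) := by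
            have e1 : w⁻¹ * w ^ (n+1) = w ^ n := by
              rw [pow_succ']; rw [← mul_assoc, inv_mul_cancel₀ hw, one_mul]
            have e2 : w * w⁻¹ ^ (n+1) = w⁻¹ ^ n := by
              rw [pow_succ']; rw [← mul_assoc, hinv, one_mul]
            linear_combination e1 - e2
  exact fun n => (key n).1

lemma chebU_pm (ε : ℂ) (hε : ε ^ 2 = 1) : ∀ n, chebU (2 * ε) n = n * ε ^ (n+1) := by
  have key : ∀ n, chebU (2*ε) n = n * ε ^ (n+1) ∧ chebU (2*ε) (n+1) = (n+1) * ε ^ (n+2) := by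
    intro n
    induction n with
    | zero =>
        constructor
        · simp [chebU]
        · show (1:ℂ) = _
          rw [hε]
          norm_num
    | succ n ih =>
      refine ⟨by push_cast; exact ih.2, ?_⟩
      have h2 : chebU (2*ε) (n+2) = (2*ε) * chebU (2*ε) (n+1) - chebU (2*ε) n := rfl
      rw [h2, ih.1, ih.2]
      have e : ε ^ (n+4) = ε ^ (n+2) := by
        have : ε ^ (n+4) = ε ^ (n+2) * ε ^ 2 := by ring
        rw [this, hε, mul_one]
      have e1 : ε ^ (n+3) = ε ^ (n+1) := by
        have : ε ^ (n+3) = ε ^ (n+1) * ε ^ 2 := by ring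
        rw [this, hε, mul_one]
      have e2 : ε ^ ((n+1)+2) = ε ^ (n+1) := by
        rw [pow_add, hε, mul_one]
      push_cast
      rw [e2]
      calc 2 * ε * ((↑n + 1) * ε ^ (n + 2)) - ↑n * ε ^ (n + 1)
          = (2*(n:ℂ) + 2) * ε ^ (n+3) - n * ε ^ (n+1) := by ring
        _ = (↑n + 1 + 1) * ε ^ (n + 1) := by rw [e1]; ring
  exact fun n => (key n).1

lemma exp_add_exp_neg (t : ℝ) :
    Complex.exp ((t:ℂ) * Complex.I) + (Complex.exp ((t:ℂ) * Complex.I))⁻¹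
      = 2 * Complex.cos (t:ℂ) := by
  rw [← Complex.exp_neg, ← neg_mul, Complex.exp_mul_I, Complex.exp_mul_I,
    Complex.cos_neg, Complex.sin_neg]
  ring

lemma exp_sub_exp_neg (t : ℝ) :
    Complex.exp ((t:ℂ) * Complex.I) - (Complex.exp ((t:ℂ) * Complex.I))⁻¹
      = 2 * Complex.sin (t:ℂ) * Complex.I := by
  rw [← Complex.exp_neg, ← neg_mul, Complex.exp_mul_I, Complex.exp_mul_I,
    Complex.cos_neg, Complex.sin_neg]
  ring

lemma cos_fold (m : ℕ) (hm : 1 ≤ m) (k : ℤ) :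
    ∃ q : ℕ, q ≤ m ∧ Real.cos (k * Real.pi / m) = Real.cos (q * Real.pi / m) := by
  have hm0 : (m:ℝ) ≠ 0 := by positivity
  set k' : ℕ := k.natAbs % (2*m) with hk'
  have h1 : Real.cos ((k:ℝ) * Real.pi / m) = Real.cos ((k.natAbs:ℝ) * Real.pi / m) := by
    have habs : ((k.natAbs:ℝ)) = |(k:ℝ)| := by
      rw [Nat.cast_natAbs]; push_cast; rfl
    rw [habs]
    rcases abs_choice ((k:ℝ)) with h | h
    · rw [h]
    · rw [h, show (-(k:ℝ)) * Real.pi / m = -((k:ℝ) * Real.pi / m) by ring, Real.cos_neg]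
  have h2 : Real.cos ((k.natAbs:ℝ) * Real.pi / m) = Real.cos ((k':ℝ) * Real.pi / m) := by
    obtain ⟨d, hd⟩ : ∃ d : ℕ, k.natAbs = 2*m*d + k' := by
      refine ⟨k.natAbs / (2*m), ?_⟩
      rw [hk']
      exact (Nat.div_add_mod k.natAbs (2*m)).symm
    rw [hd]
    push_cast
    rw [show ((2:ℝ)*m*d + k') * Real.pi / m = k' * Real.pi / m + (d:ℤ) * (2*Real.pi) by
      push_cast; field_simp; ring]
    rw [Real.cos_add_int_mul_two_pi]
  have hk'lt : k' < 2*m := Nat.mod_lt _ (by omega)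
  by_cases hle : k' ≤ m
  · exact ⟨k', hle, by rw [h1, h2]⟩
  · refine ⟨2*m - k', by omega, ?_⟩
    rw [h1, h2]
    have hcast : ((2*m - k' : ℕ) : ℝ) = 2*(m:ℝ) - k' := by
      push_cast [Nat.cast_sub (le_of_lt hk'lt)]; ring
    rw [hcast]
    rw [show ((2:ℝ)*m - k') * Real.pi / m = -(k' * Real.pi / m) + ((1:ℤ):ℝ) * (2*Real.pi) by
      push_cast; field_simp; ring]
    rw [Real.cos_add_int_mul_two_pi, Real.cos_neg]

lemma chebU_eq_zero_iff (Δ : ℂ) (m : ℕ) (hm : 1 ≤ m) :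
    chebU Δ m = 0 ↔ ∃ q : ℕ, 1 ≤ q ∧ q ≤ m - 1 ∧ Δ = 2 * Complex.cos (Real.pi * q / m) := by
  have hm0 : (m:ℂ) ≠ 0 := Nat.cast_ne_zero.mpr (by omega)
  have hmR : (m:ℝ) ≠ 0 := by positivity
  constructor
  · intro h0
    by_cases hsq : Δ ^ 2 = 4
    · exfalso
      have hε : (Δ/2) ^ 2 = 1 := by rw [div_pow, hsq]; norm_num
      have h := chebU_pm (Δ/2) hε m
      rw [show 2 * (Δ/2) = Δ by ring, h0] at h
      have hne : ((m:ℂ)) * (Δ/2) ^ (m+1) ≠ 0 := by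
        refine mul_ne_zero hm0 (pow_ne_zero _ ?_)
        intro hz
        rw [hz] at hε; simp at hε
      exact hne h.symm
    · obtain ⟨s, hs⟩ := IsAlgClosed.exists_pow_nat_eq (k := ℂ) (Δ^2 - 4) (n := 2) (by norm_num)
      have hsne : s ≠ 0 := by
        intro h; rw [h] at hs; simp at hs
        exact hsq (by linear_combination -hs)
      set w : ℂ := (Δ + s)/2 with hw
      have hprod : w * ((Δ - s)/2) = 1 := by
        field_simp [hw]; linear_combination (-1/2 : ℂ) * hs
      have hwne : w ≠ 0 := left_ne_zero_of_mul_eq_one hprod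
      have hwinv : w⁻¹ = (Δ - s)/2 :=
        (eq_inv_of_mul_eq_one_left (by rw [mul_comm]; exact hprod)).symm
      have hsum : w + w⁻¹ = Δ := by rw [hwinv, hw]; ring
      have hc := chebU_closed Δ w hwne hsum m
      rw [h0, mul_zero] at hc
      have hpow : w ^ m = w⁻¹ ^ m := sub_eq_zero.mp hc.symm
      have h2m : w ^ (2*m) = 1 := by
        have h3 : w^m * w⁻¹^m = 1 := by rw [← mul_pow, mul_inv_cancel₀ hwne, one_pow]
        calc w^(2*m) = w^m * w^m := by rw [two_mul, pow_add]
          _ = w^m * w⁻¹^m := by rw [hpow]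
          _ = 1 := h3
      set c : ℂ := Complex.log w with hcdef
      have hec : Complex.exp c = w := Complex.exp_log hwne
      have h1 : Complex.exp ((2*m : ℕ) * c) = 1 := by
        rw [Complex.exp_nat_mul, hec]; exact_mod_cast h2m
      obtain ⟨n, hn⟩ := Complex.exp_eq_one_iff.mp h1
      set t : ℝ := n * Real.pi / m with ht
      have hct : c = (t:ℂ) * Complex.I := by
        rw [ht]
        push_cast at hn ⊢
        field_simp
        linear_combination (1/2 : ℂ) * hn
      have hΔt : Δ = 2 * Complex.cos (t:ℂ) := by
        rw [← hsum, ← hec, hct, exp_add_exp_neg]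
      obtain ⟨q, hqm, hq⟩ := cos_fold m hm n
      have htq : Complex.cos (t:ℂ) = Complex.cos ((Real.pi * q / m : ℝ) : ℂ) := by
        rw [← Complex.ofReal_cos, ← Complex.ofReal_cos]
        congr 1
        rw [ht, show Real.pi * (q:ℝ) / m = (q:ℝ) * Real.pi / m by ring]
        exact hq
      have hΔq : Δ = 2 * Complex.cos ((Real.pi * q / m : ℝ) : ℂ) := by rw [hΔt, htq]
      have hq0 : q ≠ 0 := by
        intro h
        apply hsq
        have harg : Real.pi * (q:ℝ) / m = 0 := by rw [h]; simp
        have hΔ2 : Δ = 2 := by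
          rw [hΔq, harg]
          norm_num
        rw [hΔ2]; norm_num
      have hqm' : q ≠ m := by
        intro h
        apply hsq
        have harg : Real.pi * (q:ℝ) / m = Real.pi := by rw [h]; field_simp
        have hΔ2 : Δ = -2 := by
          rw [hΔq, harg, ← Complex.ofReal_cos, Real.cos_pi]; norm_num
        rw [hΔ2]; norm_num
      refine ⟨q, by omega, by omega, ?_⟩
      rw [hΔq]
      norm_cast
  · rintro ⟨q, hq1, hq2, hΔ⟩
    have hqm : q < m := by omega
    set θ : ℝ := Real.pi * q / m with hθ
    have hΔ' : Δ = 2 * Complex.cos (θ:ℂ) := by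
      rw [hΔ, hθ]; norm_cast
    set w : ℂ := Complex.exp ((θ:ℂ) * Complex.I) with hwdef
    have hwne : w ≠ 0 := Complex.exp_ne_zero _
    have hsum : w + w⁻¹ = Δ := by rw [hwdef, exp_add_exp_neg, hΔ']
    have hc := chebU_closed Δ w hwne hsum m
    have hkey : ∀ x : ℝ, (Complex.exp ((x:ℂ) * Complex.I))^m
        = Complex.exp (((m * x : ℝ):ℂ) * Complex.I) := by
      intro x
      rw [← Complex.exp_nat_mul]
      congr 1
      push_cast
      ring
    have hmθ : (m:ℝ) * θ = q * Real.pi := by rw [hθ]; field_simp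
    have hwm : w ^ m = Complex.exp (((q * Real.pi : ℝ):ℂ) * Complex.I) := by
      rw [hwdef, hkey, hmθ]
    have hwinv : w⁻¹ = Complex.exp (((-θ : ℝ):ℂ) * Complex.I) := by
      rw [hwdef, ← Complex.exp_neg]
      congr 1
      push_cast
      ring
    have hwminv : w⁻¹ ^ m = Complex.exp (((-(q * Real.pi) : ℝ):ℂ) * Complex.I) := by
      have e : (m:ℝ) * -θ = -((q:ℝ) * Real.pi) := by rw [← hmθ]; ring
      rw [hwinv, hkey, e]
    have hdiff0 : w ^ m - w⁻¹ ^ m = 0 := by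
      rw [hwm, hwminv, Complex.exp_mul_I, Complex.exp_mul_I]
      rw [show ((-(q * Real.pi) : ℝ):ℂ) = -((q * Real.pi : ℝ):ℂ) by push_cast; ring]
      rw [Complex.cos_neg, Complex.sin_neg]
      rw [← Complex.ofReal_sin, Real.sin_nat_mul_pi]
      push_cast
      ring
    rw [hdiff0] at hc
    have hsin : Complex.sin (θ:ℂ) ≠ 0 := by
      rw [← Complex.ofReal_sin]
      norm_cast
      apply ne_of_gt
      apply Real.sin_pos_of_pos_of_lt_pi
      · rw [hθ]
        have : (0:ℝ) < q := by exact_mod_cast hq1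
        positivity
      · rw [hθ]
        rw [div_lt_iff₀ (by positivity)]
        have : (q:ℝ) < m := by exact_mod_cast hqm
        nlinarith [Real.pi_pos]
    have hwdiff : w - w⁻¹ ≠ 0 := by
      rw [hwdef, exp_sub_exp_neg]
      simp [hsin, Complex.I_ne_zero]
    rcases mul_eq_zero.mp hc with h | h
    · exact absurd h hwdiff
    · exact h

lemma sl2_pow_entry (A : Matrix (Fin 2) (Fin 2) ℂ) (hA : A.det = 1) :
    ∀ n, (A ^ n) 1 0 = chebU A.trace n * A 1 0 := by
  obtain ⟨a', b', c', d', rfl⟩ : ∃ a' b' c' d', A = !![a', b'; c', d'] :=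
    ⟨A 0 0, A 0 1, A 1 0, A 1 1, Matrix.eta_fin_two A⟩
  set A : Matrix (Fin 2) (Fin 2) ℂ := !![a', b'; c', d'] with hAdef
  rw [Matrix.det_fin_two_of] at hA
  have hCH : A * A = A.trace • A - (1 : Matrix (Fin 2) (Fin 2) ℂ) := by
    ext i j
    fin_cases i <;> fin_cases j <;>
      simp [hAdef, Matrix.mul_apply, Fin.sum_univ_two, Matrix.trace_fin_two_of,
        Matrix.one_apply, Matrix.sub_apply, Matrix.smul_apply, smul_eq_mul] <;>
      (first
        | linear_combination -hA
        | ring)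
  have hrec : ∀ n, A ^ (n+2) = A.trace • A ^ (n+1) - A ^ n := by
    intro n
    have : A ^ (n+2) = A ^ n * (A * A) := by
      rw [pow_succ, pow_succ, mul_assoc]
    rw [this, hCH, Matrix.mul_sub, mul_one, Matrix.mul_smul, ← pow_succ]
  have key : ∀ n, (A ^ n) 1 0 = chebU A.trace n * A 1 0 ∧
      (A ^ (n+1)) 1 0 = chebU A.trace (n+1) * A 1 0 := by
    intro n
    induction n with
    | zero => simp [chebU, Matrix.one_apply]
    | succ n ih =>
      refine ⟨ih.2, ?_⟩
      rw [hrec n]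
      have h2 : chebU A.trace (n+2) = A.trace * chebU A.trace (n+1) - chebU A.trace n := rfl
      rw [h2]
      simp only [Matrix.sub_apply, Matrix.smul_apply, smul_eq_mul]
      rw [ih.1, ih.2]
      ring
  exact fun n => (key n).1

/-- **Theorem 2.1.** For periodic Jacobi parameters of period `p` and `m ≥ 1`,
`p_{mp-1}(z) = 0` iff `z` is a Dirichlet point (a zero of `p_{p-1}`) or
`Δ(z) = 2 cos(πq/m)` for some integer `1 ≤ q ≤ m-1`. -/
theorem oprl_periodic_zeros_of_pmp_minus_one
    (p : ℕ) (hp : 1 ≤ p) (a b : ℕ → ℝ)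
    (ha : ∀ n, 1 ≤ n → 0 < a n)
    (hpera : ∀ n, 1 ≤ n → a (n + p) = a n)
    (hperb : ∀ n, 1 ≤ n → b (n + p) = b n)
    (ha0 : a 0 = a p)
    (P : ℕ → Polynomial ℝ)
    (hP0 : P 0 = 1)
    (hPrec0 : (X : Polynomial ℝ) * P 0 = a 1 • P 1 + b 1 • P 0)
    (hPrec : ∀ n, 1 ≤ n →
      (X : Polynomial ℝ) * P n = a (n + 1) • P (n + 1) + b (n + 1) • P n + a n • P (n - 1))
    (m : ℕ) (hm : 1 ≤ m) (z : ℂ) :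
    aeval z (P (m * p - 1)) = 0 ↔
      aeval z (P (p - 1)) = 0 ∨
        ∃ q : ℕ, 1 ≤ q ∧ q ≤ m - 1 ∧
          JacobiDisc a b p z = 2 * Complex.cos (Real.pi * q / m) := by
  have hane : ∀ n, (a n : ℂ) ≠ 0 := by
    intro n
    rcases Nat.eq_zero_or_pos n with h | h
    · rw [h, ha0]
      exact_mod_cast ne_of_gt (ha p hp)
    · exact_mod_cast ne_of_gt (ha n h)
  -- entries of the transfer matrix
  have hentries : ∀ n, (JacobiT a b n z) 0 0 = aeval z (P n) ∧
      (JacobiT a b n z) 1 0 = (if n = 0 then 0 else aeval z (P (n-1))) := by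
    intro n
    induction n with
    | zero =>
      constructor
      · show (1 : Matrix (Fin 2) (Fin 2) ℂ) 0 0 = _
        rw [hP0]
        simp [Matrix.one_apply]
      · show (1 : Matrix (Fin 2) (Fin 2) ℂ) 1 0 = _
        simp [Matrix.one_apply]
    | succ n ih =>
      have hstep : JacobiT a b (n+1) z = JacobiA a b n z * JacobiT a b n z := rfl
      have h10 : (JacobiT a b (n+1) z) 1 0 = (JacobiT a b n z) 0 0 := by
        rw [hstep]
        simp [JacobiA, Matrix.mul_apply, Fin.sum_univ_two, Matrix.smul_apply, smul_eq_mul]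
        rw [inv_mul_cancel₀ (hane (n+1)), one_mul]
      have h00 : (JacobiT a b (n+1) z) 0 0 =
          ((a (n+1) : ℂ))⁻¹ * ((z - (b (n+1) : ℂ)) * (JacobiT a b n z) 0 0
            - (a n : ℂ) * (JacobiT a b n z) 1 0) := by
        rw [hstep]
        simp [JacobiA, Matrix.mul_apply, Fin.sum_univ_two, Matrix.smul_apply, smul_eq_mul]
        ring
      refine ⟨?_, ?_⟩
      · rw [h00, ih.1, ih.2]
        rcases Nat.eq_zero_or_pos n with hn | hn
        · subst hn
          have := congrArg (aeval z) hPrec0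
          simp only [_root_.map_mul, _root_.map_add, aeval_X, _root_.map_smul,
            Complex.real_smul, hP0, _root_.map_one, Complex.ofReal_one, mul_one] at this
          simp only [if_pos rfl, hP0, _root_.map_one]
          field_simp [hane 1]
          simp only [↓reduceIte, zero_add]
          first
            | linear_combination this
            | linear_combination -this
            | linear_combination (a 1 : ℂ) * this
            | linear_combination -(a 1 : ℂ) * this
        · have := congrArg (aeval z) (hPrec n hn)
          simp only [_root_.map_mul, _root_.map_add, aeval_X, _root_.map_smul,
            Complex.real_smul] at this
          rw [if_neg (by omega)]
          field_simp [hane (n+1)]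
          first
            | linear_combination this
            | linear_combination -this
            | linear_combination (a (n+1) : ℂ) * this
            | linear_combination -(a (n+1) : ℂ) * this
      · rw [h10, ih.1]
        simp
  -- periodicity
  have hAper : ∀ k, JacobiA a b (k + p) z = JacobiA a b k z := by
    intro k
    have e1 : a (k + p + 1) = a (k + 1) := by
      rw [show k + p + 1 = (k+1) + p by ring, hpera (k+1) (by omega)]
    have e2 : b (k + p + 1) = b (k + 1) := by
      rw [show k + p + 1 = (k+1) + p by ring, hperb (k+1) (by omega)]
    have e3 : a (k + p) = a k := by
      rcases Nat.eq_zero_or_pos k with h | h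
      · rw [h]; simpa using ha0.symm
      · exact hpera k h
    rw [JacobiA, JacobiA, e1, e2, e3]
  have hshift : ∀ n, JacobiT a b (n + p) z = JacobiT a b n z * JacobiT a b p z := by
    intro n
    induction n with
    | zero => simp [JacobiT]
    | succ n ih =>
      rw [show n + 1 + p = (n + p) + 1 by ring]
      show JacobiA a b (n + p) z * JacobiT a b (n + p) z
        = (JacobiA a b n z * JacobiT a b n z) * JacobiT a b p z
      rw [hAper, ih, mul_assoc]
  have hpow : ∀ k, JacobiT a b (k * p) z = (JacobiT a b p z) ^ k := by
    intro k
    induction k with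
    | zero => simp [JacobiT]
    | succ k ih =>
      rw [show (k+1) * p = k * p + p by ring, hshift, ih, pow_succ]
  -- determinant
  have hdet : ∀ n, (JacobiT a b n z).det = (a 0 : ℂ) / a n := by
    intro n
    induction n with
    | zero => simp [JacobiT, div_self (hane 0)]
    | succ n ih =>
      have h2 : JacobiT a b (n+1) z = JacobiA a b n z * JacobiT a b n z := rfl
      have e : (z - (b (n+1):ℂ)) * 0 - (-(a n:ℂ)) * (a (n+1):ℂ) = (a n : ℂ) * a (n+1) := by
        ring
      have hcard : Fintype.card (Fin 2) = 2 := by simp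
      rw [h2, Matrix.det_mul, ih, JacobiA, Matrix.det_smul, Matrix.det_fin_two_of, e, hcard]
      field_simp [hane n, hane (n+1)]
  have hdetp : (JacobiT a b p z).det = 1 := by
    rw [hdet p, ha0, div_self (hane p)]
  -- assembly
  have hTm := sl2_pow_entry (JacobiT a b p z) hdetp m
  rw [← hpow] at hTm
  have e1 : aeval z (P (m * p - 1)) = (JacobiT a b (m * p) z) 1 0 := by
    rw [(hentries (m * p)).2, if_neg (by positivity)]
  have e2 : aeval z (P (p - 1)) = (JacobiT a b p z) 1 0 := by
    rw [(hentries p).2, if_neg (by omega)]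
  rw [e1, e2, hTm, JacobiDisc]
  rw [mul_eq_zero, chebU_eq_zero_iff _ m hm]
  exact or_comm
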